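/- arXiv:2208.00088 — 3 statements merged into one kernel-verified Lean document; each statement's English description precedes it below -/
import Mathlib

section
/- Let E be a real inner product space and let l_1, ..., l_T : E → ℝ be differentiable, with each l_i being μ_i-strongly convex for some μ_i ≥ 0. Let σ_1, ..., σ_T ≥ 0 with Σ_{i=1}^{t}(σ_i + μ_i) > 0 for each t, and suppose the iterates satisfy the FTRL updates: for each t, w_t is a global minimizer (with vanishing gradient) of F_t(w) := Σ_{i=1}^{t-1} l_i(w) + Σ_{i=1}^{t-1} (σ_i/2)‖w − w_i‖², and w_{T+1} is a global minimizer of F_{T+1}. Suppose moreover that all iterates w_1, ..., w_T and the comparator w* lie in a set W of diameter D (i.e., ‖u − v‖ ≤ D for all u, v ∈ W). Then the regret satisfies R(T) = Σ_{t=1}^{T} [l_t(w_t) − l_t(w*)] ≤ Σ_{t=1}^{T} ‖∇l_t(w_t)‖² / (2 Σ_{i=1}^{t} (σ_i + μ_i)) + (D²/2) Σ_{t=1}^{T} σ_t. -/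
open Finset
open scoped Gradient RealInnerProductSpace

section Aux

variable {E : Type*} [NormedAddCommGroup E] [InnerProductSpace ℝ E] [CompleteSpace E]

lemma hga_add {f g : E → ℝ} {f' g' x : E} (hf : HasGradientAt f f' x)
    (hg : HasGradientAt g g' x) : HasGradientAt (fun y => f y + g y) (f' + g') x := by
  rw [hasGradientAt_iff_hasFDerivAt] at *
  simpa [map_add] using hf.fun_add hg

lemma hga_sub {f g : E → ℝ} {f' g' x : E} (hf : HasGradientAt f f' x)
    (hg : HasGradientAt g g' x) : HasGradientAt (fun y => f y - g y) (f' - g') x := by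
  rw [hasGradientAt_iff_hasFDerivAt] at *
  simpa [map_sub] using hf.fun_sub hg

lemma hga_sum {ι : Type*} (s : Finset ι) (f : ι → E → ℝ) (f' : ι → E) (x : E)
    (h : ∀ i ∈ s, HasGradientAt (f i) (f' i) x) :
    HasGradientAt (fun y => ∑ i ∈ s, f i y) (∑ i ∈ s, f' i) x := by
  rw [hasGradientAt_iff_hasFDerivAt]
  simpa [map_sum] using HasFDerivAt.fun_sum (fun i hi => (h i hi))

lemma hga_quad (c : ℝ) (v x : E) :
    HasGradientAt (fun y => c * ‖y - v‖ ^ 2) ((2 * c) • (x - v)) x := by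
  rw [hasGradientAt_iff_hasFDerivAt]
  have h1 : HasFDerivAt (fun y : E => y - v) (ContinuousLinearMap.id ℝ E) x :=
    (hasFDerivAt_id x).sub_const v
  have h2 := (h1.inner ℝ h1).const_mul c
  simp only [real_inner_self_eq_norm_sq] at h2
  convert h2 using 1
  · rfl
  ext y
  simp only [fderivInnerCLM_apply, ContinuousLinearMap.smul_apply,
    ContinuousLinearMap.comp_apply, ContinuousLinearMap.prod_apply,
    ContinuousLinearMap.id_apply, InnerProductSpace.toDual_apply_apply, smul_eq_mul]
  rw [real_inner_smul_left, real_inner_comm y (x - v)]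
  ring

lemma quad_identity (c : ℝ) (v x y : E) :
    c * ‖y - v‖ ^ 2 = c * ‖x - v‖ ^ 2 + ⟪(2 * c) • (x - v), y - x⟫ + c * ‖y - x‖ ^ 2 := by
  have h : y - v = (y - x) + (x - v) := by abel
  rw [h, norm_add_sq_real, real_inner_smul_left, real_inner_comm (y - x) (x - v)]
  ring

lemma convex_lower {h : E → ℝ} (hc : ConvexOn ℝ Set.univ h) {g x : E}
    (hg : HasGradientAt h g x) (y : E) : h x + ⟪g, y - x⟫ ≤ h y := by
  set L : ℝ →ᵃ[ℝ] E := AffineMap.lineMap x y with hL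
  have hline : ConvexOn ℝ Set.univ (h ∘ L) := by
    simpa using hc.comp_affineMap L
  have hd : HasDerivAt (h ∘ L) ⟪g, y - x⟫ 0 := by
    have h1 : HasDerivAt L (y - x) 0 := AffineMap.hasDerivAt_lineMap
    have h2 : HasFDerivAt h ((InnerProductSpace.toDual ℝ E) g) (L 0) := by
      rw [hL]; simpa [AffineMap.lineMap_apply_zero] using
        (hasGradientAt_iff_hasFDerivAt.mp hg)
    simpa using h2.comp_hasDerivAt 0 h1
  have := hline.le_slope_of_hasDerivWithinAt_Ioi (Set.mem_univ 0) (Set.mem_univ 1)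
    one_pos hd.hasDerivWithinAt
  rw [slope_def_field] at this
  simp only [Function.comp, hL, AffineMap.lineMap_apply_zero, AffineMap.lineMap_apply_one] at this
  -- this : ⟪g, y - x⟫ ≤ (h y - h x) / (1 - 0)
  have h10 : ((1 : ℝ) - 0) = 1 := by norm_num
  rw [h10, div_one] at this
  linarith

lemma strong_lower {f : E → ℝ} {c : ℝ}
    (hconv : ConvexOn ℝ Set.univ (fun z => f z - c / 2 * ‖z‖ ^ 2))
    {g x : E} (hg : HasGradientAt f g x) (y : E) :
    f x + ⟪g, y - x⟫ + c / 2 * ‖y - x‖ ^ 2 ≤ f y := by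
  have hq : HasGradientAt (fun z : E => c / 2 * ‖z‖ ^ 2) (c • x) x := by
    have h := hga_quad (c / 2) (0 : E) x
    have e : 2 * (c / 2) = c := by ring
    simpa [e] using h
  have hh := hga_sub hg hq
  have h1 := convex_lower hconv hh y
  have h2 := quad_identity (c / 2) (0 : E) x y
  have e : 2 * (c / 2) = c := by ring
  rw [e] at h2
  simp only [sub_zero] at h2
  rw [inner_sub_left] at h1
  linarith

lemma telescope_Icc (ψ : ℕ → ℝ) (T : ℕ) :
    ∑ t ∈ Finset.Icc 1 T, (ψ (t + 1) - ψ t) = ψ (T + 1) - ψ 1 := by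
  induction T with
  | zero => simp
  | succ n ih => rw [Finset.sum_Icc_succ_top (by omega), ih]; ring

end Aux

open scoped RealInnerProductSpace in
/-- FTRL regret bound with quadratic proximal regularization and strongly-convex losses. -/
theorem ftrl_regret_strongly_convex {E : Type*} [NormedAddCommGroup E] [InnerProductSpace ℝ E]
    [CompleteSpace E] (T : ℕ) (l : ℕ → E → ℝ) (μ σ : ℕ → ℝ) (w : ℕ → E)
    (wstar : E) (W : Set E) (D : ℝ)
    (hl : ∀ i ∈ Finset.Icc 1 T, Differentiable ℝ (l i))
    (hμ : ∀ i ∈ Finset.Icc 1 T, 0 ≤ μ i)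
    (hsc : ∀ i ∈ Finset.Icc 1 T, ConvexOn ℝ Set.univ (fun x => l i x - μ i / 2 * ‖x‖ ^ 2))
    (hσ : ∀ i ∈ Finset.Icc 1 T, 0 ≤ σ i)
    (hpos : ∀ t ∈ Finset.Icc 1 T, 0 < ∑ i ∈ Finset.Icc 1 t, (σ i + μ i))
    (F : ℕ → E → ℝ)
    (hF : ∀ t x, F t x = (∑ i ∈ Finset.Icc 1 (t - 1), l i x)
      + ∑ i ∈ Finset.Icc 1 (t - 1), σ i / 2 * ‖x - w i‖ ^ 2)
    (hmin : ∀ t ∈ Finset.Icc 1 T, (∀ x, F t (w t) ≤ F t x) ∧ ∇ (F t) (w t) = 0)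
    (hminT : ∀ x, F (T + 1) (w (T + 1)) ≤ F (T + 1) x)
    (hW : ∀ t ∈ Finset.Icc 1 T, w t ∈ W) (hWs : wstar ∈ W)
    (hD : ∀ u ∈ W, ∀ v ∈ W, ‖u - v‖ ≤ D) :
    ∑ t ∈ Finset.Icc 1 T, (l t (w t) - l t wstar)
      ≤ (∑ t ∈ Finset.Icc 1 T, ‖∇ (l t) (w t)‖ ^ 2 / (2 * ∑ i ∈ Finset.Icc 1 t, (σ i + μ i)))
        + D ^ 2 / 2 * ∑ t ∈ Finset.Icc 1 T, σ t := by
  -- gradient of F t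
  set G : ℕ → E → E := fun t x => ∑ i ∈ Finset.Icc 1 (t - 1), (∇ (l i) x + σ i • (x - w i))
    with hGdef
  have hFgrad : ∀ t, t - 1 ≤ T → ∀ x : E, HasGradientAt (F t) (G t x) x := by
    intro t ht x
    have hFe : F t = fun z => ∑ i ∈ Finset.Icc 1 (t - 1), (l i z + σ i / 2 * ‖z - w i‖ ^ 2) := by
      funext z; rw [hF, Finset.sum_add_distrib]
    rw [hFe]
    apply hga_sum
    intro i hi
    have hiT : i ∈ Finset.Icc 1 T := by
      simp only [Finset.mem_Icc] at hi ⊢; omega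
    refine hga_add ((hl i hiT x).hasGradientAt) ?_
    have h := hga_quad (σ i / 2) (w i) x
    have e : 2 * (σ i / 2) = σ i := by ring
    rwa [e] at h
  -- strong convexity lower bound for F t
  have hlower : ∀ t, t - 1 ≤ T → ∀ x y : E,
      F t x + ⟪G t x, y - x⟫ + (∑ i ∈ Finset.Icc 1 (t - 1), (σ i + μ i)) / 2 * ‖y - x‖ ^ 2
        ≤ F t y := by
    intro t ht x y
    have hterm : ∀ i ∈ Finset.Icc 1 (t - 1),
        (l i x + σ i / 2 * ‖x - w i‖ ^ 2) + ⟪∇ (l i) x + σ i • (x - w i), y - x⟫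
          + (σ i + μ i) / 2 * ‖y - x‖ ^ 2
        ≤ l i y + σ i / 2 * ‖y - w i‖ ^ 2 := by
      intro i hi
      have hiT : i ∈ Finset.Icc 1 T := by
        simp only [Finset.mem_Icc] at hi ⊢; omega
      have h1 := strong_lower (hsc i hiT) ((hl i hiT x).hasGradientAt) y
      have h2 := quad_identity (σ i / 2) (w i) x y
      have e : 2 * (σ i / 2) = σ i := by ring
      rw [e] at h2
      rw [inner_add_left]
      linarith
    have hsum := Finset.sum_le_sum hterm
    calc F t x + ⟪G t x, y - x⟫
          + (∑ i ∈ Finset.Icc 1 (t - 1), (σ i + μ i)) / 2 * ‖y - x‖ ^ 2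
        = ∑ i ∈ Finset.Icc 1 (t - 1),
            ((l i x + σ i / 2 * ‖x - w i‖ ^ 2) + ⟪∇ (l i) x + σ i • (x - w i), y - x⟫
              + (σ i + μ i) / 2 * ‖y - x‖ ^ 2) := by
          rw [hF, hGdef, Finset.sum_div, Finset.sum_mul, sum_inner,
            Finset.sum_add_distrib, Finset.sum_add_distrib, Finset.sum_add_distrib]
      _ ≤ ∑ i ∈ Finset.Icc 1 (t - 1), (l i y + σ i / 2 * ‖y - w i‖ ^ 2) := hsum
      _ = F t y := by rw [hF, Finset.sum_add_distrib]
  -- successor decomposition of F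
  have hFsucc : ∀ t ∈ Finset.Icc 1 T, ∀ x : E,
      F (t + 1) x = F t x + (l t x + σ t / 2 * ‖x - w t‖ ^ 2) := by
    intro t ht x
    have ht1 : 1 ≤ t := (Finset.mem_Icc.mp ht).1
    have e1 : t - 1 + 1 = t := Nat.succ_pred_eq_of_pos ht1
    rw [hF (t + 1) x, hF t x]
    have e2 : (t + 1) - 1 = t := rfl
    rw [e2, ← e1, Finset.sum_Icc_succ_top (by omega), Finset.sum_Icc_succ_top (by omega), e1]
    ring
  -- per-step bound
  have hstep : ∀ t ∈ Finset.Icc 1 T,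
      F (t + 1) (w t) - F (t + 1) (w (t + 1))
        ≤ ‖∇ (l t) (w t)‖ ^ 2 / (2 * ∑ i ∈ Finset.Icc 1 t, (σ i + μ i)) := by
    intro t ht
    have ht1 : 1 ≤ t := (Finset.mem_Icc.mp ht).1
    have htT : t ≤ T := (Finset.mem_Icc.mp ht).2
    -- gradient of F (t+1) at w t equals ∇ l t (w t)
    have hG0 : G t (w t) = 0 := by
      have h := (hFgrad t (by omega) (w t)).gradient
      rw [← h]; exact (hmin t ht).2
    have hGsucc : G (t + 1) (w t) = ∇ (l t) (w t) := by
      have e1 : t - 1 + 1 = t := Nat.succ_pred_eq_of_pos ht1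
      have e2 : (t + 1) - 1 = t := rfl
      rw [hGdef]
      simp only [e2]
      rw [← e1, Finset.sum_Icc_succ_top (by omega), e1]
      have hrw : (∑ k ∈ Finset.Icc 1 (t - 1), (∇ (l k) (w t) + σ k • (w t - w k)))
          = G t (w t) := rfl
      rw [hrw, hG0]
      simp
    have hl2 := hlower (t + 1) (by omega) (w t) (w (t + 1))
    have e2 : (t + 1) - 1 = t := rfl
    rw [e2, hGsucc] at hl2
    set g := ∇ (l t) (w t)
    set d := w (t + 1) - w t
    set lam := ∑ i ∈ Finset.Icc 1 t, (σ i + μ i) with hlam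
    have hlampos : 0 < lam := hpos t ht
    have hinner : -(‖g‖ * ‖d‖) ≤ ⟪g, d⟫ := by
      have := abs_real_inner_le_norm g d
      cases abs_le.mp this with
      | intro h1 h2 => linarith
    have key : ‖g‖ * ‖d‖ - lam / 2 * ‖d‖ ^ 2 ≤ ‖g‖ ^ 2 / (2 * lam) := by
      rw [le_div_iff₀ (by positivity)]
      nlinarith [sq_nonneg (‖g‖ - lam * ‖d‖)]
    linarith
  -- telescoping
  have htel : ∑ t ∈ Finset.Icc 1 T, (F (t + 1) (w (t + 1)) - F t (w t))
      = F (T + 1) (w (T + 1)) - F 1 (w 1) :=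
    telescope_Icc (fun t => F t (w t)) T
  have hF1 : F 1 (w 1) = 0 := by rw [hF]; simp
  -- loss identity
  have E1 : ∑ t ∈ Finset.Icc 1 T, l t (w t)
      = ∑ t ∈ Finset.Icc 1 T, (F (t + 1) (w t) - F t (w t)) := by
    refine Finset.sum_congr rfl fun t ht => ?_
    have := hFsucc t ht (w t)
    simp only [sub_self, norm_zero] at this
    rw [this]; ring
  -- split step sum
  have E2 : ∑ t ∈ Finset.Icc 1 T, (F (t + 1) (w t) - F t (w t))
      = (∑ t ∈ Finset.Icc 1 T, (F (t + 1) (w t) - F (t + 1) (w (t + 1))))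
        + (F (T + 1) (w (T + 1)) - F 1 (w 1)) := by
    rw [← htel, ← Finset.sum_add_distrib]
    refine Finset.sum_congr rfl fun t ht => ?_
    ring
  -- comparator value
  have E4 : F (T + 1) (w (T + 1))
      ≤ (∑ i ∈ Finset.Icc 1 T, l i wstar)
        + ∑ i ∈ Finset.Icc 1 T, σ i / 2 * ‖wstar - w i‖ ^ 2 := by
    have := hminT wstar
    rw [hF (T + 1) wstar] at this
    simpa using this
  have E5 : ∑ t ∈ Finset.Icc 1 T, (F (t + 1) (w t) - F (t + 1) (w (t + 1)))
      ≤ ∑ t ∈ Finset.Icc 1 T, ‖∇ (l t) (w t)‖ ^ 2 / (2 * ∑ i ∈ Finset.Icc 1 t, (σ i + μ i)) :=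
    Finset.sum_le_sum hstep
  have hD0 : 0 ≤ D := by
    have := hD wstar hWs wstar hWs
    simpa using this
  have E6 : ∑ i ∈ Finset.Icc 1 T, σ i / 2 * ‖wstar - w i‖ ^ 2
      ≤ D ^ 2 / 2 * ∑ t ∈ Finset.Icc 1 T, σ t := by
    rw [Finset.mul_sum]
    refine Finset.sum_le_sum fun i hi => ?_
    have hb : ‖wstar - w i‖ ≤ D := hD wstar hWs (w i) (hW i hi)
    have hb2 : ‖wstar - w i‖ ^ 2 ≤ D ^ 2 := by
      have := norm_nonneg (wstar - w i)
      nlinarith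
    have hs := hσ i hi
    nlinarith
  have Efinal : ∑ t ∈ Finset.Icc 1 T, (l t (w t) - l t wstar)
      = ∑ t ∈ Finset.Icc 1 T, l t (w t) - ∑ t ∈ Finset.Icc 1 T, l t wstar :=
    Finset.sum_sub_distrib _ _
  linarith
end

section
/- Let E be a real inner product space and let l_1, ..., l_T : E → ℝ be differentiable, convex and L-smooth (gradient L-Lipschitz) with L > 0, and suppose each l_t attains a global minimum at some w*_t ∈ E. Let w* be a comparator, define ε_t² := l_t(w*) − l_t(w*_t) ≥ 0 and ℰ := √(Σ_{t=1}^{T} ε_t²), and assume ℰ > 0. Set the constant step-size η := min{1/ℰ, 1/(2L)}. Suppose the iterates satisfy the FTRL updates with constant regularization: for each t ≥ 2, w_t is a global minimizer (with vanishing gradient) of F_t(w) := Σ_{i=1}^{t-1} l_i(w) + (1/(2η))‖w − w_1‖², and suppose all iterates w_1, ..., w_T and w* lie in a set W of diameter D. Then R(T) = Σ_{t=1}^{T} [l_t(w_t) − l_t(w*)] ≤ 2D²L + (D² + 2L)·√(Σ_{t=1}^{T} ε_t²). -/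
open Finset
open scoped Gradient

open scoped RealInnerProductSpace

section Helpers

variable {E : Type*} [NormedAddCommGroup E] [InnerProductSpace ℝ E] [CompleteSpace E]

lemma my_hasFDerivAt_grad {f : E → ℝ} {x : E} (hf : DifferentiableAt ℝ f x) :
    HasFDerivAt f (InnerProductSpace.toDual ℝ E (∇ f x)) x :=
  hasGradientAt_iff_hasFDerivAt.mp hf.hasGradientAt

lemma my_line_hasDerivAt {f : E → ℝ} (hf : Differentiable ℝ f) (x v : E) (s : ℝ) :
    HasDerivAt (fun s : ℝ => f (x + s • v)) ⟪∇ f (x + s • v), v⟫ s := by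
  have h1 : HasDerivAt (fun s : ℝ => x + s • v) v s := by
    simpa using ((hasDerivAt_id s).smul_const v).const_add x
  have h2 := (my_hasFDerivAt_grad (hf (x + s • v))).comp_hasDerivAt s h1
  exact h2

lemma my_convex_grad {f : E → ℝ} (hf : Differentiable ℝ f) (hc : ConvexOn ℝ Set.univ f)
    (x y : E) : f x + ⟪∇ f x, y - x⟫ ≤ f y := by
  set v := y - x with hv
  have hg : ∀ s : ℝ, HasDerivAt (fun s : ℝ => f (x + s • v)) ⟪∇ f (x + s • v), v⟫ s :=
    my_line_hasDerivAt hf x v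
  have hgc : ConvexOn ℝ Set.univ (fun s : ℝ => f (x + s • v)) := by
    have := hc.comp_affineMap (AffineMap.lineMap x y : ℝ →ᵃ[ℝ] E)
    simp only [Set.preimage_univ] at this
    have e : (fun s : ℝ => f (x + s • v)) = f ∘ AffineMap.lineMap x y := by
      funext s
      simp only [Function.comp_apply, AffineMap.lineMap_apply, vsub_eq_sub, vadd_eq_add, hv]
      rw [add_comm]
    rw [e]; exact this
  have key := hgc.le_slope_of_hasDerivAt (Set.mem_univ (0:ℝ)) (Set.mem_univ (1:ℝ))
    one_pos (by simpa only [zero_smul, add_zero] using hg 0)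
  have : slope (fun s : ℝ => f (x + s • v)) 0 1 = f y - f x := by
    simp [slope_def_field, hv]
  rw [this] at key
  linarith

lemma my_descent {f : E → ℝ} {L : ℝ} (hL : 0 < L) (hf : Differentiable ℝ f)
    (hs : ∀ x y : E, ‖∇ f x - ∇ f y‖ ≤ L * ‖x - y‖) (x y : E) :
    f y ≤ f x + ⟪∇ f x, y - x⟫ + L / 2 * ‖y - x‖ ^ 2 := by
  set v := y - x with hv
  set φ : ℝ → ℝ := fun s => f (x + s • v) - s * ⟪∇ f x, v⟫ - L / 2 * ‖v‖ ^ 2 * s ^ 2 with hφ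
  have hder : ∀ s : ℝ, HasDerivAt φ
      (⟪∇ f (x + s • v), v⟫ - ⟪∇ f x, v⟫ - L / 2 * ‖v‖ ^ 2 * (2 * s)) s := by
    intro s
    have h1 := my_line_hasDerivAt hf x v s
    have h2 : HasDerivAt (fun s : ℝ => s * ⟪∇ f x, v⟫) ⟪∇ f x, v⟫ s := by
      simpa using (hasDerivAt_id s).mul_const (⟪∇ f x, v⟫)
    have h3 : HasDerivAt (fun s : ℝ => L / 2 * ‖v‖ ^ 2 * s ^ 2)
        (L / 2 * ‖v‖ ^ 2 * (2 * s)) s := by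
      have h3' := (hasDerivAt_pow 2 s).const_mul (L / 2 * ‖v‖ ^ 2)
      have e : L / 2 * ‖v‖ ^ 2 * (2 * s) = L / 2 * ‖v‖ ^ 2 * (((2 : ℕ) : ℝ) * s ^ (2 - 1)) := by
        norm_num
      rw [e]; exact h3'
    exact (h1.sub h2).sub h3
  have hanti : AntitoneOn φ (Set.Icc 0 1) := by
    apply antitoneOn_of_deriv_nonpos (convex_Icc 0 1)
    · exact fun s _ => (hder s).differentiableAt.continuousAt.continuousWithinAt
    · intro s _
      exact (hder s).differentiableAt.differentiableWithinAt
    · intro s hs'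
      rw [interior_Icc] at hs'
      rw [(hder s).deriv]
      have hb : ⟪∇ f (x + s • v) - ∇ f x, v⟫ ≤ L * s * ‖v‖ ^ 2 := by
        calc ⟪∇ f (x + s • v) - ∇ f x, v⟫ ≤ ‖∇ f (x + s • v) - ∇ f x‖ * ‖v‖ :=
              real_inner_le_norm _ _
          _ ≤ L * ‖(x + s • v) - x‖ * ‖v‖ := by
              have := hs (x + s • v) x
              nlinarith [norm_nonneg v, this]
          _ = L * s * ‖v‖ ^ 2 := by
              simp [norm_smul, abs_of_pos hs'.1, sq]; ring
      rw [inner_sub_left] at hb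
      nlinarith
  have h01 := hanti (Set.mem_Icc.mpr ⟨le_refl 0, zero_le_one⟩)
    (Set.mem_Icc.mpr ⟨zero_le_one, le_refl 1⟩) zero_le_one
  simp only [hφ, zero_smul, add_zero, one_smul, zero_mul, one_pow, mul_one, sub_zero,
    zero_pow, mul_zero] at h01
  have hxy : x + v = y := by simp [hv]
  rw [hxy] at h01
  linarith

lemma my_grad_sq_le {f : E → ℝ} {L : ℝ} (hL : 0 < L) (hf : Differentiable ℝ f)
    (hs : ∀ x y : E, ‖∇ f x - ∇ f y‖ ≤ L * ‖x - y‖) {m : E} (hm : ∀ x, f m ≤ f x) (x : E) :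
    ‖∇ f x‖ ^ 2 ≤ 2 * L * (f x - f m) := by
  have h := my_descent hL hf hs x (x - (1 / L) • ∇ f x)
  have h2 := hm (x - (1 / L) • ∇ f x)
  have e1 : (x - (1 / L) • ∇ f x) - x = -((1/L) • ∇ f x) := by abel
  rw [e1] at h
  rw [inner_neg_right, real_inner_smul_right, real_inner_self_eq_norm_sq] at h
  rw [norm_neg, norm_smul] at h
  rw [Real.norm_eq_abs, abs_of_pos (by positivity : (0:ℝ) < 1 / L), mul_pow] at h
  have e2 : f x + -(1 / L * ‖∇ f x‖ ^ 2) + L / 2 * ((1 / L) ^ 2 * ‖∇ f x‖ ^ 2)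
      = f x - ‖∇ f x‖ ^ 2 / (2 * L) := by
    field_simp; ring
  rw [e2] at h
  have h3 : ‖∇ f x‖ ^ 2 / (2 * L) ≤ f x - f m := by linarith
  have h4 := mul_le_mul_of_nonneg_left h3 (by positivity : (0:ℝ) ≤ 2 * L)
  have e3 : 2 * L * (‖∇ f x‖ ^ 2 / (2 * L)) = ‖∇ f x‖ ^ 2 := by field_simp
  linarith [h4, e3.symm.le, e3.le]

lemma my_F_hasGradientAt (s : Finset ℕ) (l : ℕ → E → ℝ)
    (hl : ∀ i ∈ s, Differentiable ℝ (l i)) (c : ℝ) (b x : E) :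
    HasGradientAt (fun x => (∑ i ∈ s, l i x) + c * ‖x - b‖ ^ 2)
      ((∑ i ∈ s, ∇ (l i) x) + (2 * c) • (x - b)) x := by
  rw [hasGradientAt_iff_hasFDerivAt]
  have h1 : HasFDerivAt (fun x : E => ∑ i ∈ s, l i x)
      (∑ i ∈ s, InnerProductSpace.toDual ℝ E (∇ (l i) x)) x :=
    HasFDerivAt.fun_sum fun i hi => my_hasFDerivAt_grad ((hl i hi) x)
  have h0 : HasFDerivAt (fun x : E => x - b) (ContinuousLinearMap.id ℝ E) x :=
    (hasFDerivAt_id x).sub_const b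
  have h2 : HasFDerivAt (fun x : E => c * ‖x - b‖ ^ 2)
      (c • ((2 • (innerSL ℝ (x - b)).comp (ContinuousLinearMap.id ℝ E)))) x :=
    (h0.norm_sq).const_mul c
  have h3 := h1.add h2
  refine h3.congr_fderiv ?_
  ext v
  simp [inner_add_left, inner_smul_left, sum_inner, real_inner_smul_left]
  ring

end Helpers

/-- FTRL with constant regularization achieves constant regret plus a misspecification term
for smooth convex losses (Theorem: FTRL - Smooth + Convex). -/
theorem ftrl_regret_smooth_convex {E : Type*} [NormedAddCommGroup E] [InnerProductSpace ℝ E]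
    [CompleteSpace E] (T : ℕ) (L : ℝ) (hL : 0 < L) (l : ℕ → E → ℝ)
    (w wopt : ℕ → E) (wstar : E) (W : Set E) (D : ℝ) (η : ℝ)
    (hl : ∀ t ∈ Finset.Icc 1 T, Differentiable ℝ (l t))
    (hconv : ∀ t ∈ Finset.Icc 1 T, ConvexOn ℝ Set.univ (l t))
    (hsmooth : ∀ t ∈ Finset.Icc 1 T, ∀ x y : E, ‖∇ (l t) x - ∇ (l t) y‖ ≤ L * ‖x - y‖)
    (hopt : ∀ t ∈ Finset.Icc 1 T, ∀ x, l t (wopt t) ≤ l t x)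
    (hEpos : 0 < Real.sqrt (∑ t ∈ Finset.Icc 1 T, (l t wstar - l t (wopt t))))
    (hη : η = min (1 / Real.sqrt (∑ t ∈ Finset.Icc 1 T, (l t wstar - l t (wopt t))))
      (1 / (2 * L)))
    (hupdate : ∀ t ∈ Finset.Icc 2 (T + 1),
      (∀ x, (∑ i ∈ Finset.Icc 1 (t - 1), l i (w t)) + 1 / (2 * η) * ‖w t - w 1‖ ^ 2
          ≤ (∑ i ∈ Finset.Icc 1 (t - 1), l i x) + 1 / (2 * η) * ‖x - w 1‖ ^ 2)
        ∧ ∇ (fun x => (∑ i ∈ Finset.Icc 1 (t - 1), l i x)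
            + 1 / (2 * η) * ‖x - w 1‖ ^ 2) (w t) = 0)
    (hW : ∀ t ∈ Finset.Icc 1 T, w t ∈ W) (hWs : wstar ∈ W)
    (hD : ∀ u ∈ W, ∀ v ∈ W, ‖u - v‖ ≤ D) :
    ∑ t ∈ Finset.Icc 1 T, (l t (w t) - l t wstar)
      ≤ 2 * D ^ 2 * L
        + (D ^ 2 + 2 * L) * Real.sqrt (∑ t ∈ Finset.Icc 1 T, (l t wstar - l t (wopt t))) := by
  set S : ℝ := ∑ t ∈ Finset.Icc 1 T, (l t wstar - l t (wopt t)) with hSdef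
  set ℰ : ℝ := Real.sqrt S with hEdef
  have hS : 0 < S := Real.sqrt_pos.mp hEpos
  have hE2 : ℰ ^ 2 = S := Real.sq_sqrt hS.le
  clear_value S ℰ
  have hηpos : 0 < η := by
    rw [hη]; exact lt_min (by positivity) (by positivity)
  have hT : 1 ≤ T := by
    by_contra h
    push_neg at h
    interval_cases T
    rw [hSdef] at hS; simp at hS
  have hDpos : 0 ≤ D := le_trans (norm_nonneg _) (hD wstar hWs wstar hWs)
  -- stationarity
  have hstat : ∀ t ∈ Finset.Icc 1 T,
      (∑ i ∈ Finset.Icc 1 (t - 1), ∇ (l i) (w t)) + (1 / η) • (w t - w 1) = 0 := by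
    intro t ht
    rw [Finset.mem_Icc] at ht
    rcases eq_or_lt_of_le ht.1 with h1 | h1
    · simp [← h1]
    · have ht2 : t ∈ Finset.Icc 2 (T + 1) := Finset.mem_Icc.mpr ⟨h1, by omega⟩
      have hgz := (hupdate t ht2).2
      have hdl : ∀ i ∈ Finset.Icc 1 (t - 1), Differentiable ℝ (l i) := by
        intro i hi
        rw [Finset.mem_Icc] at hi
        exact hl i (Finset.mem_Icc.mpr ⟨hi.1, by omega⟩)
      have hg := my_F_hasGradientAt (Finset.Icc 1 (t - 1)) l hdl (1 / (2 * η)) (w 1) (w t)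
      rw [hg.gradient] at hgz
      have : (2 * (1 / (2 * η))) = 1 / η := by field_simp
      rw [this] at hgz
      exact hgz
  -- potential function
  set Φ : ℕ → ℝ := fun t => (∑ i ∈ Finset.Icc 1 t, l i (w (t + 1)))
      + 1 / (2 * η) * ‖w (t + 1) - w 1‖ ^ 2 with hΦdef
  have hstep : ∀ t ∈ Finset.Icc 1 T,
      l t (w t) + Φ (t - 1) ≤ Φ t + η / 2 * ‖∇ (l t) (w t)‖ ^ 2 := by
    intro t ht
    rw [Finset.mem_Icc] at ht
    set x := w t with hx
    set y := w (t + 1) with hy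
    set g := ∇ (l t) x with hg
    -- convexity of each loss, summed over Icc 1 t
    have hcs : (∑ i ∈ Finset.Icc 1 t, l i x)
        + ⟪∑ i ∈ Finset.Icc 1 t, ∇ (l i) x, y - x⟫ ≤ ∑ i ∈ Finset.Icc 1 t, l i y := by
      rw [sum_inner, ← Finset.sum_add_distrib]
      apply Finset.sum_le_sum
      intro i hi
      rw [Finset.mem_Icc] at hi
      exact my_convex_grad (hl i (Finset.mem_Icc.mpr ⟨hi.1, le_trans hi.2 ht.2⟩))
        (hconv i (Finset.mem_Icc.mpr ⟨hi.1, le_trans hi.2 ht.2⟩)) x y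
    -- split the sum of gradients
    have hsplit : ∑ i ∈ Finset.Icc 1 t, ∇ (l i) x
        = (∑ i ∈ Finset.Icc 1 (t - 1), ∇ (l i) x) + g := by
      have h1 : t = (t - 1) + 1 := by omega
      rw [h1, Finset.sum_Icc_succ_top (by omega : 1 ≤ (t - 1) + 1)]
      rw [← h1]
    have hstatt := hstat t (Finset.mem_Icc.mpr ht)
    have hsg : ∑ i ∈ Finset.Icc 1 (t - 1), ∇ (l i) x = -((1 / η) • (x - w 1)) := by
      rw [eq_neg_iff_add_eq_zero]; exact hstatt
    -- quadratic identity
    have hq : (1 / (2 * η)) * ‖y - w 1‖ ^ 2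
        = (1 / (2 * η)) * ‖x - w 1‖ ^ 2 + (1 / η) * ⟪x - w 1, y - x⟫
          + (1 / (2 * η)) * ‖y - x‖ ^ 2 := by
      have e : y - w 1 = (x - w 1) + (y - x) := by abel
      rw [e, norm_add_sq_real]
      field_simp
    -- combine: F_{t+1}(x) + ⟪g, y - x⟫ + (1/(2η))‖y-x‖² ≤ F_{t+1}(y)
    have hinner : ⟪∑ i ∈ Finset.Icc 1 t, ∇ (l i) x, y - x⟫
        = ⟪g, y - x⟫ - (1 / η) * ⟪x - w 1, y - x⟫ := by
      rw [hsplit, hsg, inner_add_left, inner_neg_left, real_inner_smul_left]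
      ring
    have hcomb : (∑ i ∈ Finset.Icc 1 t, l i x) + (1 / (2 * η)) * ‖x - w 1‖ ^ 2
        + ⟪g, y - x⟫ + (1 / (2 * η)) * ‖y - x‖ ^ 2
        ≤ (∑ i ∈ Finset.Icc 1 t, l i y) + (1 / (2 * η)) * ‖y - w 1‖ ^ 2 := by
      rw [hq]
      rw [hinner] at hcs
      linarith
    -- bound ⟪g, y-x⟫ + (1/(2η))‖y-x‖² from below
    have hlb : -(η / 2 * ‖g‖ ^ 2) ≤ ⟪g, y - x⟫ + (1 / (2 * η)) * ‖y - x‖ ^ 2 := by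
      have h5 : ⟪g, x - y⟫ ≤ ‖g‖ * ‖x - y‖ := real_inner_le_norm g (x - y)
      have h6 : ⟪g, x - y⟫ = -⟪g, y - x⟫ := by
        rw [← inner_neg_right]; congr 1; abel
      have h7 : ‖x - y‖ = ‖y - x‖ := norm_sub_rev x y
      have h8 : 0 ≤ (‖y - x‖ - η * ‖g‖) ^ 2 := sq_nonneg _
      have h9 : ‖g‖ * ‖y - x‖ - (1 / (2 * η)) * ‖y - x‖ ^ 2 - η / 2 * ‖g‖ ^ 2
          = -((‖y - x‖ - η * ‖g‖) ^ 2) / (2 * η) := by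
        field_simp
        ring
      rw [h6, h7] at h5
      have h10 : ‖g‖ * ‖y - x‖ - (1 / (2 * η)) * ‖y - x‖ ^ 2 - η / 2 * ‖g‖ ^ 2 ≤ 0 := by
        rw [h9, neg_div]
        exact neg_nonpos.mpr (div_nonneg h8 (by positivity))
      linarith
    -- identify Φ values
    have htt : t - 1 + 1 = t := by omega
    have hΦt1 : Φ (t - 1) = (∑ i ∈ Finset.Icc 1 (t - 1), l i x)
        + 1 / (2 * η) * ‖x - w 1‖ ^ 2 := by
      simp only [hΦdef, htt]; rfl
    have hsumsplit : ∑ i ∈ Finset.Icc 1 t, l i x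
        = (∑ i ∈ Finset.Icc 1 (t - 1), l i x) + l t x := by
      have h1 : t = (t - 1) + 1 := by omega
      rw [h1, Finset.sum_Icc_succ_top (by omega : 1 ≤ (t - 1) + 1)]
      rw [← h1]
    rw [hΦt1]
    simp only [hΦdef]
    rw [← hy]
    rw [hsumsplit] at hcomb
    linarith
  -- telescoping
  clear_value Φ
  have htel' : ∀ n : ℕ, ∑ t ∈ Finset.Icc 1 n, (Φ t - Φ (t - 1)) = Φ n - Φ 0 := by
    intro n
    induction n with
    | zero => simp
    | succ n ih =>
      rw [Finset.sum_Icc_succ_top (by omega : 1 ≤ n + 1), ih]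
      simp only [Nat.add_sub_cancel]
      ring
  have htel := htel' T
  have hΦ0 : Φ 0 = 0 := by simp [hΦdef]
  have hsum1 : ∑ t ∈ Finset.Icc 1 T, l t (w t)
      ≤ Φ T + ∑ t ∈ Finset.Icc 1 T, η / 2 * ‖∇ (l t) (w t)‖ ^ 2 := by
    have h1 := Finset.sum_le_sum hstep
    have e1 : ∑ t ∈ Finset.Icc 1 T, (l t (w t) + Φ (t - 1))
        = ∑ t ∈ Finset.Icc 1 T, l t (w t) + ∑ t ∈ Finset.Icc 1 T, Φ (t - 1) :=
      Finset.sum_add_distrib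
    have e2 : ∑ t ∈ Finset.Icc 1 T, (Φ t + η / 2 * ‖∇ (l t) (w t)‖ ^ 2)
        = ∑ t ∈ Finset.Icc 1 T, Φ t + ∑ t ∈ Finset.Icc 1 T, η / 2 * ‖∇ (l t) (w t)‖ ^ 2 :=
      Finset.sum_add_distrib
    have e3 : ∑ t ∈ Finset.Icc 1 T, (Φ t - Φ (t - 1))
        = ∑ t ∈ Finset.Icc 1 T, Φ t - ∑ t ∈ Finset.Icc 1 T, Φ (t - 1) :=
      Finset.sum_sub_distrib _ _
    rw [e1, e2] at h1
    rw [e3] at htel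
    linarith
  -- comparator bound
  have hTmem : T + 1 ∈ Finset.Icc 2 (T + 1) := Finset.mem_Icc.mpr ⟨by omega, le_refl _⟩
  have hcompF := (hupdate (T + 1) hTmem).1 wstar
  have hT1 : T + 1 - 1 = T := by omega
  rw [hT1] at hcompF
  have hΦT : Φ T ≤ (∑ i ∈ Finset.Icc 1 T, l i wstar) + 1 / (2 * η) * ‖wstar - w 1‖ ^ 2 := by
    simp only [hΦdef]
    exact hcompF
  -- diameter
  have hw1 : w 1 ∈ W := hW 1 (Finset.mem_Icc.mpr ⟨le_refl 1, hT⟩)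
  have hdb : ‖wstar - w 1‖ ≤ D := hD wstar hWs (w 1) hw1
  have hdb2 : ‖wstar - w 1‖ ^ 2 ≤ D ^ 2 := by nlinarith [norm_nonneg (wstar - w 1)]
  -- gradient norm bound via smoothness
  have hgb : ∀ t ∈ Finset.Icc 1 T,
      η / 2 * ‖∇ (l t) (w t)‖ ^ 2 ≤ η * L * (l t (w t) - l t (wopt t)) := by
    intro t ht
    have h1 := my_grad_sq_le hL (hl t ht) (hsmooth t ht) (hopt t ht) (w t)
    have h2 := mul_le_mul_of_nonneg_left h1 (by positivity : (0:ℝ) ≤ η / 2)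
    have e : η / 2 * (2 * L * (l t (w t) - l t (wopt t)))
        = η * L * (l t (w t) - l t (wopt t)) := by ring
    linarith
  have hsumg : ∑ t ∈ Finset.Icc 1 T, η / 2 * ‖∇ (l t) (w t)‖ ^ 2
      ≤ η * L * ∑ t ∈ Finset.Icc 1 T, (l t (w t) - l t (wopt t)) := by
    rw [Finset.mul_sum]
    exact Finset.sum_le_sum hgb
  set R : ℝ := ∑ t ∈ Finset.Icc 1 T, (l t (w t) - l t wstar) with hRdef
  clear_value R
  have hdecomp : ∑ t ∈ Finset.Icc 1 T, (l t (w t) - l t (wopt t)) = R + S := by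
    rw [hRdef, hSdef, ← Finset.sum_add_distrib]
    exact Finset.sum_congr rfl fun t _ => by ring
  have hRsum : R = ∑ t ∈ Finset.Icc 1 T, l t (w t) - ∑ t ∈ Finset.Icc 1 T, l t wstar := by
    rw [hRdef]; exact Finset.sum_sub_distrib _ _
  have hcd : 1 / (2 * η) * ‖wstar - w 1‖ ^ 2 ≤ 1 / (2 * η) * D ^ 2 :=
    mul_le_mul_of_nonneg_left hdb2 (by positivity)
  have hmaster : R ≤ 1 / (2 * η) * D ^ 2 + η * L * (R + S) := by
    rw [← hdecomp]
    linarith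
  -- scalar facts
  have hη1 : η ≤ 1 / ℰ := by rw [hη]; exact min_le_left _ _
  have hη2 : η ≤ 1 / (2 * L) := by rw [hη]; exact min_le_right _ _
  have hηL : η * L ≤ 1 / 2 := by
    have h1 := mul_le_mul_of_nonneg_right hη2 hL.le
    have e : 1 / (2 * L) * L = 1 / 2 := by field_simp
    linarith
  have hηE : η * ℰ ≤ 1 := by
    have h1 := mul_le_mul_of_nonneg_right hη1 hEpos.le
    have e : 1 / ℰ * ℰ = 1 := by field_simp
    linarith
  have hηS : η * S ≤ ℰ := by
    have h1 := mul_le_mul_of_nonneg_right hηE hEpos.le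
    have e : η * S = η * ℰ * ℰ := by rw [← hE2]; ring
    rw [e]
    linarith
  have hinv : 1 / η ≤ ℰ + 2 * L := by
    rw [hη]
    rcases min_cases (1 / ℰ) (1 / (2 * L)) with ⟨h, _⟩ | ⟨h, _⟩ <;> rw [h, one_div_one_div]
    · linarith
    · linarith
  have hcD : 1 / (2 * η) * D ^ 2 ≤ (ℰ + 2 * L) / 2 * D ^ 2 := by
    apply mul_le_mul_of_nonneg_right _ (sq_nonneg D)
    have e : 1 / (2 * η) = (1 / η) / 2 := by ring
    rw [e]
    linarith
  have hexp : η * L * (R + S) = η * L * R + η * L * S := by ring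
  rcases le_or_gt R 0 with hR | hR
  · have hpos : (0:ℝ) ≤ 2 * D ^ 2 * L + (D ^ 2 + 2 * L) * ℰ := by positivity
    linarith
  · have h1 : η * L * R ≤ 1 / 2 * R := mul_le_mul_of_nonneg_right hηL hR.le
    have h2 : η * L * S ≤ L * ℰ := by
      have h3 := mul_le_mul_of_nonneg_left hηS hL.le
      have e : η * L * S = L * (η * S) := by ring
      rw [e]
      linarith
    linarith [hmaster, hcD, h1, h2, hexp]
end

section
/- Let E be a real inner product space and let l_1, ..., l_T : E → ℝ be differentiable with each l_i being μ-strongly convex for some μ > 0. Suppose the iterates satisfy the follow-the-leader (FTL) updates: for each t, w_t is a global minimizer (with vanishing gradient) of F_t(w) := Σ_{i=1}^{t-1} l_i(w), and w_{T+1} is a global minimizer of F_{T+1}. Then for any comparator w* ∈ E, the regret satisfies R(T) = Σ_{t=1}^{T} [l_t(w_t) − l_t(w*)] ≤ Σ_{t=1}^{T} ‖∇l_t(w_t)‖² / (2 μ t). -/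
open InnerProductSpace
open scoped Gradient RealInnerProductSpace

lemma convex_first_order {E : Type*} [NormedAddCommGroup E] [InnerProductSpace ℝ E]
    {φ : E → ℝ} (hc : ConvexOn ℝ Set.univ φ) {φ' : E →L[ℝ] ℝ} {x : E}
    (hd : HasFDerivAt φ φ' x) (y : E) : φ' (y - x) ≤ φ y - φ x := by
  set g : ℝ →ᵃ[ℝ] E := AffineMap.lineMap x y with hg
  have hψc : ConvexOn ℝ Set.univ (φ ∘ g) := by
    simpa using hc.comp_affineMap g
  have hline : ∀ s : ℝ, g s = x + s • (y - x) := by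
    intro s; simp [hg, AffineMap.lineMap_apply, add_comm]
  have hderiv : HasDerivAt (fun s : ℝ => x + s • (y - x)) (y - x) 0 := by
    simpa using ((hasDerivAt_id (0:ℝ)).smul_const (y - x)).const_add x
  have hψd : HasDerivAt (φ ∘ g) (φ' (y - x)) 0 := by
    have : HasDerivAt (φ ∘ fun s : ℝ => x + s • (y - x)) (φ' (y - x)) 0 := by
      refine HasFDerivAt.comp_hasDerivAt _ ?_ hderiv
      simpa using hd
    convert this using 2
    exact funext fun s => by rw [hline]
  have := hψc.le_slope_of_hasDerivWithinAt_Ioi (Set.mem_univ (0:ℝ)) (Set.mem_univ (1:ℝ))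
    one_pos (hψd.hasDerivWithinAt)
  simpa [slope, hline, Function.comp] using this

lemma pl_bound {E : Type*} [NormedAddCommGroup E] [InnerProductSpace ℝ E] [CompleteSpace E]
    (m : ℝ) (hm : 0 < m) (f : E → ℝ) (hf : Differentiable ℝ f)
    (hc : ConvexOn ℝ Set.univ (fun x => f x - m / 2 * ‖x‖ ^ 2)) (x x0 : E) :
    f x - f x0 ≤ ‖∇ f x‖ ^ 2 / (2 * m) := by
  set g := ∇ f x with hgdef
  have hfd : HasFDerivAt f (toDual ℝ E g) x := by
    rw [← hasGradientAt_iff_hasFDerivAt]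
    exact (hf x).hasGradientAt
  have hnd : HasFDerivAt (fun y : E => m / 2 * ‖y‖ ^ 2) ((m / 2) • ((2:ℕ) • innerSL ℝ x)) x :=
    ((hasStrictFDerivAt_norm_sq x).hasFDerivAt).const_mul (m / 2)
  have hφd : HasFDerivAt (fun y : E => f y - m / 2 * ‖y‖ ^ 2)
      (toDual ℝ E g - (m / 2) • ((2:ℕ) • innerSL ℝ x)) x := hfd.sub hnd
  have key : ∀ y : E, f x + ⟪g, y - x⟫ + m / 2 * ‖y - x‖ ^ 2 ≤ f y := by
    intro y
    have h1 := convex_first_order hc hφd y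
    simp only [ContinuousLinearMap.sub_apply, ContinuousLinearMap.smul_apply,
      innerSL_apply_apply, toDual_apply_apply, smul_eq_mul, nsmul_eq_mul, Nat.cast_ofNat] at h1
    have h2 : ‖y - x‖ ^ 2 = ‖y‖ ^ 2 - 2 * ⟪y, x⟫ + ‖x‖ ^ 2 := norm_sub_sq_real y x
    have h3 : ⟪x, y - x⟫ = ⟪x, y⟫ - ‖x‖ ^ 2 := by
      rw [inner_sub_right, real_inner_self_eq_norm_sq]
    have h4 : ⟪x, y⟫ = ⟪y, x⟫ := real_inner_comm y x
    nlinarith [h1]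
  have hk := key x0
  have h5 : -(‖g‖ * ‖x0 - x‖) ≤ ⟪g, x0 - x⟫ :=
    neg_le_of_abs_le (abs_real_inner_le_norm g (x0 - x))
  rw [le_div_iff₀ (by positivity : (0:ℝ) < 2 * m)]
  nlinarith [sq_nonneg (‖g‖ - m * ‖x0 - x‖), norm_nonneg (x0 - x), norm_nonneg g]

lemma sum_convexOn {E : Type*} [NormedAddCommGroup E] [InnerProductSpace ℝ E] {ι : Type*}
    (s : Finset ι) (f : ι → E → ℝ) (h : ∀ i ∈ s, ConvexOn ℝ Set.univ (f i)) :
    ConvexOn ℝ Set.univ (fun x => ∑ i ∈ s, f i x) := by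
  classical
  induction s using Finset.induction with
  | empty => simpa using convexOn_const 0 convex_univ
  | insert _ _ hne ih =>
    simp only [Finset.sum_insert hne]
    exact (h _ (Finset.mem_insert_self _ _)).add (ih fun i hi => h i (Finset.mem_insert_of_mem hi))

open Finset
open scoped Gradient

/-- FTL regret bound for strongly-convex losses in terms of gradient norms at the iterates. -/
theorem ftl_regret_strongly_convex {E : Type*} [NormedAddCommGroup E] [InnerProductSpace ℝ E]
    [CompleteSpace E] (T : ℕ) (μ : ℝ) (hμ : 0 < μ) (l : ℕ → E → ℝ) (w : ℕ → E)
    (hl : ∀ i ∈ Finset.Icc 1 T, Differentiable ℝ (l i))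
    (hsc : ∀ i ∈ Finset.Icc 1 T, ConvexOn ℝ Set.univ (fun x => l i x - μ / 2 * ‖x‖ ^ 2))
    (F : ℕ → E → ℝ)
    (hF : ∀ t x, F t x = ∑ i ∈ Finset.Icc 1 (t - 1), l i x)
    (hmin : ∀ t ∈ Finset.Icc 1 T, (∀ x, F t (w t) ≤ F t x) ∧ ∇ (F t) (w t) = 0)
    (hminT : ∀ x, F (T + 1) (w (T + 1)) ≤ F (T + 1) x) :
    ∀ wstar : E,
      ∑ t ∈ Finset.Icc 1 T, (l t (w t) - l t wstar)
        ≤ ∑ t ∈ Finset.Icc 1 T, ‖∇ (l t) (w t)‖ ^ 2 / (2 * μ * t) := by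
  intro wstar
  have hFdiff : ∀ t, t ≤ T + 1 → Differentiable ℝ (F t) := by
    intro t ht
    rw [show F t = fun x => ∑ i ∈ Finset.Icc 1 (t - 1), l i x from funext (hF t)]
    refine Differentiable.fun_sum fun i hi => hl i ?_
    rw [Finset.mem_Icc] at hi ⊢; omega
  have hsplit : ∀ t, 1 ≤ t → ∀ x, F (t + 1) x = F t x + l t x := by
    intro t ht x
    obtain ⟨s, rfl⟩ : ∃ s, t = s + 1 := ⟨t - 1, by omega⟩
    rw [hF, hF]
    simp only [Nat.add_sub_cancel]
    exact Finset.sum_Icc_succ_top (by omega) _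
  -- per-round bound via the PL-type inequality for the strongly convex function F (t+1)
  have key : ∀ t ∈ Finset.Icc 1 T,
      F (t + 1) (w t) - F (t + 1) (w (t + 1)) ≤ ‖∇ (l t) (w t)‖ ^ 2 / (2 * μ * t) := by
    intro t htm
    rw [Finset.mem_Icc] at htm
    obtain ⟨ht1, htT⟩ := htm
    have htm' : t ∈ Finset.Icc 1 T := Finset.mem_Icc.mpr ⟨ht1, htT⟩
    have hm : (0:ℝ) < (t:ℝ) * μ := by positivity
    have hd1 : Differentiable ℝ (F (t + 1)) := hFdiff (t + 1) (by omega)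
    have hconv : ConvexOn ℝ Set.univ (fun x => F (t + 1) x - (↑t * μ) / 2 * ‖x‖ ^ 2) := by
      have he : (fun x => F (t + 1) x - (↑t * μ) / 2 * ‖x‖ ^ 2)
          = fun x => ∑ i ∈ Finset.Icc 1 t, (l i x - μ / 2 * ‖x‖ ^ 2) := by
        funext x
        rw [hF, Finset.sum_sub_distrib, Finset.sum_const, Nat.card_Icc]
        simp only [Nat.add_sub_cancel, nsmul_eq_mul]
        ring
      rw [he]
      exact sum_convexOn _ _ fun i hi => hsc i (by rw [Finset.mem_Icc] at hi ⊢; omega)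
    -- gradient of F (t+1) at w t equals gradient of l t at w t
    have hFt : Differentiable ℝ (F t) := hFdiff t (by omega)
    have hlt : Differentiable ℝ (l t) := hl t htm'
    have hadd : HasGradientAt (F (t + 1)) (∇ (F t) (w t) + ∇ (l t) (w t)) (w t) := by
      rw [show F (t + 1) = fun x => F t x + l t x from funext (hsplit t ht1)]
      rw [hasGradientAt_iff_hasFDerivAt]
      have h1 := hasGradientAt_iff_hasFDerivAt.mp (hFt (w t)).hasGradientAt
      have h2 := hasGradientAt_iff_hasFDerivAt.mp (hlt (w t)).hasGradientAt
      simpa [map_add] using h1.fun_add h2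
    have hgrad : ∇ (F (t + 1)) (w t) = ∇ (l t) (w t) := by
      rw [hadd.gradient, (hmin t htm').2, zero_add]
    have hb := pl_bound ((t:ℝ) * μ) hm (F (t + 1)) hd1 hconv (w t) (w (t + 1))
    rw [hgrad] at hb
    have harith : ‖∇ (l t) (w t)‖ ^ 2 / (2 * ((t:ℝ) * μ)) = ‖∇ (l t) (w t)‖ ^ 2 / (2 * μ * t) := by
      ring_nf
    rw [harith] at hb
    exact hb
  -- telescoping
  have tel : ∀ n, ∑ t ∈ Finset.Icc 1 n, (F t (w t) - F (t + 1) (w (t + 1)))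
      = F 1 (w 1) - F (n + 1) (w (n + 1)) := by
    intro n
    induction n with
    | zero => simp
    | succ n ih =>
      rw [Finset.sum_Icc_succ_top (by omega : 1 ≤ n + 1), ih]
      ring
  have hG1 : F 1 (w 1) = 0 := by rw [hF]; simp
  have h3 : F (T + 1) wstar = ∑ t ∈ Finset.Icc 1 T, l t wstar := by
    rw [hF]; simp only [Nat.add_sub_cancel]
  have hcongr : ∑ t ∈ Finset.Icc 1 T, (F (t + 1) (w t) - F (t + 1) (w (t + 1)))
      = ∑ t ∈ Finset.Icc 1 T, (l t (w t) + (F t (w t) - F (t + 1) (w (t + 1)))) := by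
    refine Finset.sum_congr rfl fun t htm => ?_
    rw [Finset.mem_Icc] at htm
    rw [hsplit t htm.1 (w t)]
    ring
  have hsum : ∑ t ∈ Finset.Icc 1 T, (l t (w t) - l t wstar)
      ≤ ∑ t ∈ Finset.Icc 1 T, (F (t + 1) (w t) - F (t + 1) (w (t + 1))) := by
    rw [hcongr, Finset.sum_add_distrib, tel T, hG1, Finset.sum_sub_distrib]
    have h4 := hminT wstar
    rw [h3] at h4
    linarith
  exact le_trans hsum (Finset.sum_le_sum key)
end
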